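/- For every graph F with at least one edge and every nonempty forest of copies 𝒻 of F, the union graph 𝔉 = ⋃𝒻 satisfies m₂(𝔉) = m₂(F). -/

import Mathlib

open SimpleGraph

/-- `d2v v e` : the `2`-density of a graph with `v` vertices and `e ≥ 1` edges. -/
noncomputable def d2v (v e : ℕ) : ℝ :=
  if 3 ≤ v then ((e : ℝ) - 1) / ((v : ℝ) - 2) else 1

/-- The `2`-density of a graph (given as a subgraph of the complete graph on `ℕ`). -/
noncomputable def d2 (H : Subgraph (⊤ : SimpleGraph ℕ)) : ℝ :=
  d2v H.verts.ncard H.edgeSet.ncard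

/-- The maximum `2`-density `m₂`: the maximum of `d2` over all subgraphs with at least
one edge. -/
noncomputable def m2 (H : Subgraph (⊤ : SimpleGraph ℕ)) : ℝ :=
  sSup {x : ℝ | ∃ H' ≤ H, H'.edgeSet.Nonempty ∧ x = d2 H'}

/-- The condition that an enumeration `F 0, F 1, …` of graphs (given as subgraphs of an
ambient graph `G`) forms a forest of copies. -/
def ForestCond {V : Type*} {G : SimpleGraph V} {m : ℕ} (F : Fin m → G.Subgraph) : Prop :=
  ∀ j : Fin m, (j : ℕ) ≠ 0 →
    ((F j).verts ∩ ⋃ (i : Fin m) (_ : i < j), (F i).verts) = ∅ ∨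
    (∃ v, ((F j).verts ∩ ⋃ (i : Fin m) (_ : i < j), (F i).verts) = {v}) ∨
    (∃ x y, (F j).Adj x y ∧ (∃ i : Fin m, i < j ∧ (F i).Adj x y) ∧
      ((F j).verts ∩ ⋃ (i : Fin m) (_ : i < j), (F i).verts) = {x, y})

/-- A set of graphs is a *forest of copies* if it admits an enumeration satisfying
`ForestCond`. -/
def IsForestOfCopies {V : Type*} {G : SimpleGraph V} (𝒻 : Set G.Subgraph) : Prop :=
  ∃ (m : ℕ) (F : Fin m → G.Subgraph), Function.Injective F ∧
    (∀ H, H ∈ 𝒻 ↔ ∃ i, F i = H) ∧ ForestCond F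

open Set

namespace ForestAux


lemma edgeSet_finite (K : Subgraph (⊤ : SimpleGraph ℕ)) (h : K.verts.Finite) :
    K.edgeSet.Finite := by
  apply ((h.prod h).image (fun p : ℕ × ℕ => s(p.1, p.2))).subset
  intro e he
  induction e using Sym2.ind with
  | _ a b =>
    rw [Subgraph.mem_edgeSet] at he
    exact ⟨(a, b), ⟨K.edge_vert he, K.edge_vert (K.adj_symm he)⟩, rfl⟩

lemma subgraphOfAdj_le {G₂ : Subgraph (⊤ : SimpleGraph ℕ)} {x y : ℕ}
    (h : G₂.Adj x y) (htop : (⊤ : SimpleGraph ℕ).Adj x y) :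
    (⊤ : SimpleGraph ℕ).subgraphOfAdj htop ≤ G₂ := by
  constructor
  · rintro v (rfl | rfl)
    · exact G₂.edge_vert h
    · exact G₂.edge_vert (G₂.adj_symm h)
  · intro a b hab
    rw [subgraphOfAdj_adj, Sym2.eq_iff] at hab
    rcases hab with ⟨rfl, rfl⟩ | ⟨rfl, rfl⟩
    · exact h
    · exact G₂.adj_symm h

/-- The key boundedness predicate. -/
def Bnd (M : ℝ) (H : Subgraph (⊤ : SimpleGraph ℕ)) : Prop :=
  ∀ K ≤ H, K.edgeSet.Nonempty →
    (K.edgeSet.ncard : ℝ) - 1 ≤ M * ((K.verts.ncard : ℝ) - 2)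

lemma glue (M : ℝ) (hM : 1 ≤ M) (G₁ G₂ : Subgraph (⊤ : SimpleGraph ℕ))
    (h1 : G₁.verts.Finite) (h2 : G₂.verts.Finite)
    (hB1 : Bnd M G₁) (hB2 : Bnd M G₂)
    (hS : G₁.verts ∩ G₂.verts = ∅ ∨ (∃ v, G₁.verts ∩ G₂.verts = {v}) ∨
      (∃ x y, G₁.Adj x y ∧ G₂.Adj x y ∧ G₁.verts ∩ G₂.verts = {x, y})) :
    Bnd M (G₁ ⊔ G₂) := by
  have hM0 : (0:ℝ) ≤ M := zero_le_one.trans hM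
  intro H hH hHe
  have hHv : H.verts.Finite := (h1.union h2).subset (by rw [← Subgraph.verts_sup]; exact hH.1)
  set A := H ⊓ G₁ with hA
  set B := H ⊓ G₂ with hB
  have hHAB : H = A ⊔ B := by
    rw [hA, hB, ← inf_sup_left, inf_eq_left.mpr hH]
  have hAv : A.verts.Finite := hHv.subset (Subgraph.verts_mono inf_le_left)
  have hBv : B.verts.Finite := hHv.subset (Subgraph.verts_mono inf_le_left)
  have hAe : A.edgeSet.Finite := edgeSet_finite A hAv
  have hBe : B.edgeSet.Finite := edgeSet_finite B hBv
  have hHef : H.edgeSet.Finite := edgeSet_finite H hHv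
  have hVU : H.verts = A.verts ∪ B.verts := by
    conv_lhs => rw [hHAB]
    exact Subgraph.verts_sup _ _
  have hEU : H.edgeSet = A.edgeSet ∪ B.edgeSet := by
    conv_lhs => rw [hHAB]
    exact Subgraph.edgeSet_sup
  have hvEq : H.verts.ncard + (A.verts ∩ B.verts).ncard = A.verts.ncard + B.verts.ncard := by
    rw [hVU]; exact Set.ncard_union_add_ncard_inter _ _ hAv hBv
  have heEq : H.edgeSet.ncard + (A.edgeSet ∩ B.edgeSet).ncard
      = A.edgeSet.ncard + B.edgeSet.ncard := by
    rw [hEU]; exact Set.ncard_union_add_ncard_inter _ _ hAe hBe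
  rcases Set.eq_empty_or_nonempty A.edgeSet with hA0 | hAne
  · have hBne : B.edgeSet.Nonempty := by
      rw [hEU, hA0, Set.empty_union] at hHe; exact hHe
    have hb := hB2 B inf_le_right hBne
    have heB : H.edgeSet.ncard = B.edgeSet.ncard := by rw [hEU, hA0, Set.empty_union]
    have hvB : (B.verts.ncard : ℝ) ≤ (H.verts.ncard : ℝ) :=
      Nat.cast_le.mpr (Set.ncard_le_ncard (Subgraph.verts_mono inf_le_left) hHv)
    rw [heB]; nlinarith [hb, hvB]
  rcases Set.eq_empty_or_nonempty B.edgeSet with hB0 | hBne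
  · have hAne : A.edgeSet.Nonempty := by
      rw [hEU, hB0, Set.union_empty] at hHe; exact hHe
    have hb := hB1 A inf_le_right hAne
    have heA : H.edgeSet.ncard = A.edgeSet.ncard := by rw [hEU, hB0, Set.union_empty]
    have hvA : (A.verts.ncard : ℝ) ≤ (H.verts.ncard : ℝ) :=
      Nat.cast_le.mpr (Set.ncard_le_ncard (Subgraph.verts_mono inf_le_left) hHv)
    rw [heA]; nlinarith [hb, hvA]
  have bA := hB1 A inf_le_right hAne
  have bB := hB2 B inf_le_right hBne
  have hsub : A.verts ∩ B.verts ⊆ G₁.verts ∩ G₂.verts := by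
    rw [hA, hB, Subgraph.verts_inf, Subgraph.verts_inf]
    exact fun v hv => ⟨hv.1.2, hv.2.2⟩
  have hcv : (H.verts.ncard : ℝ) + ((A.verts ∩ B.verts).ncard : ℝ)
      = (A.verts.ncard : ℝ) + (B.verts.ncard : ℝ) := by exact_mod_cast hvEq
  have hce : (H.edgeSet.ncard : ℝ) ≤ (A.edgeSet.ncard : ℝ) + (B.edgeSet.ncard : ℝ) := by
    have h' : H.edgeSet.ncard ≤ A.edgeSet.ncard + B.edgeSet.ncard := by omega
    exact_mod_cast h'
  have finish_small : (A.verts ∩ B.verts).ncard ≤ 1 →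
      (H.edgeSet.ncard : ℝ) - 1 ≤ M * ((H.verts.ncard : ℝ) - 2) := by
    intro ht
    have ht' : ((A.verts ∩ B.verts).ncard : ℝ) ≤ 1 := by exact_mod_cast ht
    nlinarith [bA, bB, mul_le_mul_of_nonneg_left ht' hM0]
  rcases hS with h | ⟨v, h⟩ | ⟨x, y, hxy1, hxy2, h⟩
  · apply finish_small
    have he : A.verts ∩ B.verts = ∅ := Set.subset_empty_iff.mp (h ▸ hsub)
    rw [he, Set.ncard_empty]; exact Nat.zero_le 1
  · apply finish_small
    calc (A.verts ∩ B.verts).ncard ≤ ({v} : Set ℕ).ncard :=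
          Set.ncard_le_ncard (h ▸ hsub) (Set.finite_singleton v)
      _ = 1 := Set.ncard_singleton v
  · rcases Nat.lt_or_ge (A.verts ∩ B.verts).ncard 2 with ht | ht
    · exact finish_small (by omega)
    · have hxyne : x ≠ y := (G₁.adj_sub hxy1).ne
      have hZ : A.verts ∩ B.verts = {x, y} := by
        apply Set.eq_of_subset_of_ncard_le (h ▸ hsub) ?_ ((Set.finite_singleton y).insert x)
        rw [Set.ncard_pair hxyne]; exact ht
      have hxA : x ∈ A.verts ∩ B.verts := by rw [hZ]; exact Set.mem_insert _ _
      have hyA : y ∈ A.verts ∩ B.verts := by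
        rw [hZ]; exact Set.mem_insert_iff.mpr (Or.inr rfl)
      have hxH : x ∈ H.verts := by
        have h' := hxA.1; rw [hA, Subgraph.verts_inf] at h'; exact h'.1
      have hyH : y ∈ H.verts := by
        have h' := hyA.1; rw [hA, Subgraph.verts_inf] at h'; exact h'.1
      have htop : (⊤ : SimpleGraph ℕ).Adj x y := G₁.adj_sub hxy1
      set Hd := H ⊔ (⊤ : SimpleGraph ℕ).subgraphOfAdj htop with hHdd
      have hHdle : Hd ≤ G₁ ⊔ G₂ :=
        sup_le hH ((subgraphOfAdj_le hxy2 htop).trans le_sup_right)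
      have hHdv : Hd.verts = H.verts := by
        rw [hHdd, Subgraph.verts_sup, subgraphOfAdj_verts]
        apply Set.union_eq_self_of_subset_right
        rintro v (rfl | rfl)
        · exact hxH
        · exact hyH
      have hHdvfin : Hd.verts.Finite := by rw [hHdv]; exact hHv
      set Ad := Hd ⊓ G₁ with hAd
      set Bd := Hd ⊓ G₂ with hBd
      have hHdAB : Hd = Ad ⊔ Bd := by
        rw [hAd, hBd, ← inf_sup_left, inf_eq_left.mpr hHdle]
      have hAdv : Ad.verts.Finite := hHdvfin.subset (Subgraph.verts_mono inf_le_left)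
      have hBdv : Bd.verts.Finite := hHdvfin.subset (Subgraph.verts_mono inf_le_left)
      have hAde : Ad.edgeSet.Finite := edgeSet_finite Ad hAdv
      have hBde : Bd.edgeSet.Finite := edgeSet_finite Bd hBdv
      have hHde : Hd.edgeSet.Finite := edgeSet_finite Hd hHdvfin
      have hVUd : Hd.verts = Ad.verts ∪ Bd.verts := by
        conv_lhs => rw [hHdAB]
        exact Subgraph.verts_sup _ _
      have hEUd : Hd.edgeSet = Ad.edgeSet ∪ Bd.edgeSet := by
        conv_lhs => rw [hHdAB]
        exact Subgraph.edgeSet_sup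
      have hxHd : x ∈ Hd.verts := by rw [hHdv]; exact hxH
      have hyHd : y ∈ Hd.verts := by rw [hHdv]; exact hyH
      have hxG : x ∈ G₁.verts ∩ G₂.verts := by rw [h]; exact Set.mem_insert _ _
      have hyG : y ∈ G₁.verts ∩ G₂.verts := by
        rw [h]; exact Set.mem_insert_iff.mpr (Or.inr rfl)
      have hZd : Ad.verts ∩ Bd.verts = {x, y} := by
        apply Set.Subset.antisymm
        · rw [hAd, hBd, Subgraph.verts_inf, Subgraph.verts_inf, ← h]
          exact fun v hv => ⟨hv.1.2, hv.2.2⟩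
        · rw [hAd, hBd, Subgraph.verts_inf, Subgraph.verts_inf]
          rintro v (rfl | rfl)
          · exact ⟨⟨hxHd, hxG.1⟩, ⟨hxHd, hxG.2⟩⟩
          · exact ⟨⟨hyHd, hyG.1⟩, ⟨hyHd, hyG.2⟩⟩
      have hvEqd : Hd.verts.ncard + 2 = Ad.verts.ncard + Bd.verts.ncard := by
        have h' := Set.ncard_union_add_ncard_inter Ad.verts Bd.verts hAdv hBdv
        rw [← hVUd, hZd, Set.ncard_pair hxyne] at h'
        exact h'
      have hHdadj : Hd.Adj x y := by
        rw [hHdd]; exact Subgraph.sup_adj.mpr (Or.inr rfl)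
      have hAdadj : Ad.Adj x y := by
        rw [hAd]; exact Subgraph.inf_adj.mpr ⟨hHdadj, hxy1⟩
      have hBdadj : Bd.Adj x y := by
        rw [hBd]; exact Subgraph.inf_adj.mpr ⟨hHdadj, hxy2⟩
      have hcd : 1 ≤ (Ad.edgeSet ∩ Bd.edgeSet).ncard :=
        (Set.ncard_pos (hAde.inter_of_left _)).mpr
          ⟨s(x, y), Subgraph.mem_edgeSet.mpr hAdadj, Subgraph.mem_edgeSet.mpr hBdadj⟩
      have heEqd : Hd.edgeSet.ncard + (Ad.edgeSet ∩ Bd.edgeSet).ncard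
          = Ad.edgeSet.ncard + Bd.edgeSet.ncard := by
        rw [hEUd]; exact Set.ncard_union_add_ncard_inter _ _ hAde hBde
      have bAd := hB1 Ad inf_le_right
        ⟨s(x, y), Subgraph.mem_edgeSet.mpr hAdadj⟩
      have bBd := hB2 Bd inf_le_right
        ⟨s(x, y), Subgraph.mem_edgeSet.mpr hBdadj⟩
      have hHleHd : H ≤ Hd := by rw [hHdd]; exact le_sup_left
      have heHd : (H.edgeSet.ncard : ℝ) ≤ (Hd.edgeSet.ncard : ℝ) :=
        Nat.cast_le.mpr (Set.ncard_le_ncard (Subgraph.edgeSet_mono hHleHd) hHde)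
      have hvHd : Hd.verts.ncard = H.verts.ncard := by rw [hHdv]
      have c1 : (Hd.verts.ncard : ℝ) + 2 = (Ad.verts.ncard : ℝ) + (Bd.verts.ncard : ℝ) := by
        exact_mod_cast hvEqd
      have c2 : (Hd.edgeSet.ncard : ℝ) ≤ (Ad.edgeSet.ncard : ℝ) + (Bd.edgeSet.ncard : ℝ) - 1 := by
        have h' : Hd.edgeSet.ncard + 1 ≤ Ad.edgeSet.ncard + Bd.edgeSet.ncard := by omega
        have h'' : ((Hd.edgeSet.ncard + 1 : ℕ) : ℝ)
            ≤ ((Ad.edgeSet.ncard + Bd.edgeSet.ncard : ℕ) : ℝ) := Nat.cast_le.mpr h'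
        push_cast at h''
        linarith
      rw [← hvHd]
      nlinarith [bAd, bBd, c1, c2, heHd]


lemma edgeSet_map {V W : Type*} {G : SimpleGraph V} {G' : SimpleGraph W} (f : G →g G')
    (X : G.Subgraph) : (X.map f).edgeSet = Sym2.map f '' X.edgeSet := by
  ext e
  induction e using Sym2.ind with
  | _ a b =>
    rw [Subgraph.mem_edgeSet]
    constructor
    · rintro ⟨u, v, h, rfl, rfl⟩
      exact ⟨s(u, v), h, Sym2.map_pair_eq f u v⟩
    · rintro ⟨e', he', hmap⟩
      induction e' using Sym2.ind with
      | _ u v =>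
        rw [Sym2.map_pair_eq, Sym2.eq_iff] at hmap
        rw [Subgraph.mem_edgeSet] at he'
        rcases hmap with ⟨h1, h2⟩ | ⟨h1, h2⟩
        · exact ⟨u, v, he', h1, h2⟩
        · exact ⟨v, u, X.adj_symm he', h2, h1⟩

lemma transport {H₁ H₂ : Subgraph (⊤ : SimpleGraph ℕ)} (e : H₁.coe ≃g H₂.coe)
    {K : Subgraph (⊤ : SimpleGraph ℕ)} (hK : K ≤ H₁) :
    ∃ K' ≤ H₂, K'.verts.ncard = K.verts.ncard ∧ K'.edgeSet.ncard = K.edgeSet.ncard ∧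
      (K.edgeSet.Nonempty → K'.edgeSet.Nonempty) := by
  set K₀ : H₁.coe.Subgraph := H₁.restrict K with hK₀
  have hKeq : Subgraph.coeSubgraph K₀ = K := by
    rw [hK₀, Subgraph.coeSubgraph_restrict_eq]
    exact inf_eq_right.mpr hK
  have einj : Function.Injective (e.toHom : H₁.verts → H₂.verts) := e.toEquiv.injective
  have hKv : K.verts = Subtype.val '' K₀.verts := by
    rw [← hKeq]; rfl
  have hKe : K.edgeSet = Sym2.map Subtype.val '' K₀.edgeSet := by
    rw [← hKeq]; exact edgeSet_map _ _
  refine ⟨Subgraph.coeSubgraph (K₀.map e.toHom), Subgraph.coeSubgraph_le _, ?_, ?_, ?_⟩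
  · rw [hKv]
    show ((Subgraph.map H₂.hom (K₀.map e.toHom)).verts).ncard = _
    rw [Subgraph.map_verts, Subgraph.map_verts,
      Set.ncard_image_of_injective _ Subgraph.hom_injective,
      Set.ncard_image_of_injective _ einj,
      Set.ncard_image_of_injective _ Subtype.val_injective]
  · rw [hKe]
    show ((Subgraph.map H₂.hom (K₀.map e.toHom)).edgeSet).ncard = _
    rw [edgeSet_map, edgeSet_map,
      Set.ncard_image_of_injective _ (Sym2.map.injective Subgraph.hom_injective),
      Set.ncard_image_of_injective _ (Sym2.map.injective einj),
      Set.ncard_image_of_injective _ (Sym2.map.injective Subtype.val_injective)]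
  · intro hne
    rw [hKe] at hne
    obtain ⟨x, x₀, hx₀, rfl⟩ := hne
    show ((Subgraph.map H₂.hom (K₀.map e.toHom)).edgeSet).Nonempty
    rw [edgeSet_map, edgeSet_map]
    exact ⟨_, ⟨_, ⟨_, hx₀, rfl⟩, rfl⟩⟩


lemma subgraph_set_finite (F : Subgraph (⊤ : SimpleGraph ℕ)) (hF : F.verts.Finite) :
    {H : Subgraph (⊤ : SimpleGraph ℕ) | H ≤ F}.Finite := by
  have hFe : F.edgeSet.Finite := edgeSet_finite F hF
  have hinj : Function.Injective
      (fun H : Subgraph (⊤ : SimpleGraph ℕ) => (H.verts, H.edgeSet)) := by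
    intro H₁ H₂ h
    rw [Prod.mk.injEq] at h
    ext x y
    · rw [h.1]
    · simp only [← Subgraph.mem_edgeSet, h.2]
  apply Set.Finite.of_finite_image _ (hinj.injOn)
  apply (hF.finite_subsets.prod hFe.finite_subsets).subset
  rintro _ ⟨H, hH, rfl⟩
  exact ⟨hH.1, Subgraph.edgeSet_mono hH⟩

lemma two_le_ncard_verts (K : Subgraph (⊤ : SimpleGraph ℕ)) (hfin : K.verts.Finite)
    (he : K.edgeSet.Nonempty) : 2 ≤ K.verts.ncard := by
  obtain ⟨e, he⟩ := he
  induction e using Sym2.ind with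
  | _ a b =>
    rw [Subgraph.mem_edgeSet] at he
    have hab : a ≠ b := (K.adj_sub he).ne
    have : ({a, b} : Set ℕ) ⊆ K.verts := by
      rintro x (rfl | rfl)
      · exact K.edge_vert he
      · exact K.edge_vert (K.adj_symm he)
    calc 2 = ({a, b} : Set ℕ).ncard := (Set.ncard_pair hab).symm
    _ ≤ K.verts.ncard := Set.ncard_le_ncard this hfin

lemma edge_ncard_le_one (K : Subgraph (⊤ : SimpleGraph ℕ))
    (hv : K.verts.ncard = 2) : K.edgeSet.ncard ≤ 1 := by
  obtain ⟨x, y, hxy, hvs⟩ := Set.ncard_eq_two.mp hv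
  have : K.edgeSet ⊆ {s(x, y)} := by
    intro e he
    induction e using Sym2.ind with
    | _ a b =>
      rw [Subgraph.mem_edgeSet] at he
      have hab : a ≠ b := (K.adj_sub he).ne
      have ha : a ∈ ({x, y} : Set ℕ) := hvs ▸ K.edge_vert he
      have hb : b ∈ ({x, y} : Set ℕ) := hvs ▸ K.edge_vert (K.adj_symm he)
      rcases ha with rfl | rfl <;> rcases hb with rfl | rfl
      · exact absurd rfl hab
      · rfl
      · exact Set.mem_singleton_iff.mpr (Sym2.eq_swap)
      · exact absurd rfl hab
  calc K.edgeSet.ncard ≤ ({s(x,y)} : Set (Sym2 ℕ)).ncard :=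
        Set.ncard_le_ncard this (Set.finite_singleton _)
  _ = 1 := Set.ncard_singleton _


end ForestAux

open ForestAux Set

/-- For every (finite) graph `F` with at least one edge and every nonempty forest of
copies `𝒻` of `F`, the union graph `𝔉 = ⋃𝒻` satisfies `m₂(𝔉) = m₂(F)`. -/
theorem m2_of_forest_of_copies (F : Subgraph (⊤ : SimpleGraph ℕ))
    (hFfin : F.verts.Finite) (hFe : F.edgeSet.Nonempty)
    (𝒻 : Set (Subgraph (⊤ : SimpleGraph ℕ))) (hne : 𝒻.Nonempty)
    (hforest : IsForestOfCopies 𝒻)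
    (hcopies : ∀ H ∈ 𝒻, Nonempty (H.coe ≃g F.coe)) :
    m2 (sSup 𝒻) = m2 F := by
  classical
  obtain ⟨m, Fen, hinj, hmem, hFC⟩ := hforest
  -- basic facts about `m2 F`
  have hFsub : {H : Subgraph (⊤ : SimpleGraph ℕ) | H ≤ F}.Finite := subgraph_set_finite F hFfin
  have hFset : {x : ℝ | ∃ H' ≤ F, H'.edgeSet.Nonempty ∧ x = d2 H'} =
      d2 '' {H : Subgraph (⊤ : SimpleGraph ℕ) | H ≤ F ∧ H.edgeSet.Nonempty} := by
    ext x
    constructor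
    · rintro ⟨H', h1, h2, rfl⟩; exact ⟨H', ⟨h1, h2⟩, rfl⟩
    · rintro ⟨H', ⟨h1, h2⟩, rfl⟩; exact ⟨H', h1, h2, rfl⟩
  have hFsetFin : {x : ℝ | ∃ H' ≤ F, H'.edgeSet.Nonempty ∧ x = d2 H'}.Finite := by
    rw [hFset]
    exact (hFsub.subset (fun H h => h.1)).image _
  have hFbdd : BddAbove {x : ℝ | ∃ H' ≤ F, H'.edgeSet.Nonempty ∧ x = d2 H'} :=
    hFsetFin.bddAbove
  obtain ⟨e₀, he₀⟩ := hFe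
  obtain ⟨a, b, hab⟩ : ∃ a b, F.Adj a b := by
    clear hFset hFsetFin hFbdd
    induction e₀ using Sym2.ind with
    | _ a b => exact ⟨a, b, he₀⟩
  have htopab : (⊤ : SimpleGraph ℕ).Adj a b := F.adj_sub hab
  set E₀ := (⊤ : SimpleGraph ℕ).subgraphOfAdj htopab with hE₀
  have hE₀le : E₀ ≤ F := subgraphOfAdj_le hab htopab
  have hE₀v : E₀.verts.ncard = 2 := by
    rw [hE₀, subgraphOfAdj_verts]
    exact Set.ncard_pair htopab.ne
  have hE₀e : E₀.edgeSet.ncard = 1 := by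
    rw [hE₀, edgeSet_subgraphOfAdj, Set.ncard_singleton]
  have hE₀d2 : d2 E₀ = 1 := by
    rw [d2, hE₀v, hE₀e, d2v, if_neg (by omega)]
  have hE₀ne : E₀.edgeSet.Nonempty := by
    rw [hE₀, edgeSet_subgraphOfAdj]
    exact ⟨_, rfl⟩
  have hM1 : 1 ≤ m2 F := by
    rw [← hE₀d2]
    exact le_csSup hFbdd ⟨E₀, hE₀le, hE₀ne, rfl⟩
  set M := m2 F with hMdef
  have hM0 : (0 : ℝ) ≤ M := zero_le_one.trans hM1
  -- `F` satisfies the bound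
  have hBndF : Bnd M F := by
    intro K hK hKne
    have hKfin : K.verts.Finite := hFfin.subset hK.1
    have h2v : 2 ≤ K.verts.ncard := two_le_ncard_verts K hKfin hKne
    have hd2 : d2 K ≤ M := le_csSup hFbdd ⟨K, hK, hKne, rfl⟩
    rw [d2, d2v] at hd2
    by_cases h3 : 3 ≤ K.verts.ncard
    · rw [if_pos h3] at hd2
      have hpos : (0 : ℝ) < (K.verts.ncard : ℝ) - 2 := by
        have h3' : (3 : ℝ) ≤ (K.verts.ncard : ℝ) := by exact_mod_cast h3
        linarith
      rw [div_le_iff₀ hpos] at hd2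
      exact hd2
    · have hv2 : K.verts.ncard = 2 := by omega
      have he1 : K.edgeSet.ncard ≤ 1 := edge_ncard_le_one K hv2
      have he1' : (K.edgeSet.ncard : ℝ) ≤ 1 := by exact_mod_cast he1
      rw [hv2]
      norm_num
      linarith
  -- each copy satisfies the bound
  have hmemF : ∀ i : Fin m, Fen i ∈ 𝒻 := fun i => (hmem _).mpr ⟨i, rfl⟩
  have hvfin : ∀ i : Fin m, (Fen i).verts.Finite := by
    intro i
    obtain ⟨e⟩ := hcopies _ (hmemF i)
    have hf1 : Finite F.verts := hFfin
    have hf2 : Finite (Fen i).verts := Finite.of_equiv _ e.toEquiv.symm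
    exact Set.toFinite _
  have hBndC : ∀ i : Fin m, Bnd M (Fen i) := by
    intro i K hK hKne
    obtain ⟨e⟩ := hcopies _ (hmemF i)
    obtain ⟨K', hK'le, hv', he', hne'⟩ := transport e hK
    have h' := hBndF K' hK'le (hne' hKne)
    rw [hv', he'] at h'
    exact h'
  -- the partial unions
  set Gk : ℕ → Subgraph (⊤ : SimpleGraph ℕ) :=
    fun k => ⨆ i : Fin m, ⨆ _ : (i : ℕ) < k, Fen i with hGk
  have hGkverts : ∀ k, (Gk k).verts = ⋃ (i : Fin m), ⋃ (_ : (i : ℕ) < k), (Fen i).verts := by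
    intro k
    simp only [hGk, Subgraph.verts_iSup]
  have hGkadj : ∀ k a b, (Gk k).Adj a b ↔ ∃ i : Fin m, (i : ℕ) < k ∧ (Fen i).Adj a b := by
    intro k a b
    simp only [hGk, Subgraph.iSup_adj, exists_prop]
  have hGkfin : ∀ k, (Gk k).verts.Finite := by
    intro k
    apply (Set.finite_iUnion hvfin).subset
    rw [hGkverts]
    exact Set.iUnion_mono fun i => Set.iUnion_subset fun _ => subset_rfl
  have hBndG : ∀ k, Bnd M (Gk k) := by
    intro k
    induction k with
    | zero =>
      intro K hK hKne
      exfalso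
      obtain ⟨e, he⟩ := hKne
      induction e using Sym2.ind with
      | _ u v =>
        rw [Subgraph.mem_edgeSet] at he
        obtain ⟨i, hi, -⟩ := (hGkadj 0 u v).mp (hK.2 he)
        omega
    | succ k ih =>
      by_cases hk : k < m
      · have hstep : Gk (k + 1) = Gk k ⊔ Fen ⟨k, hk⟩ := by
          simp only [hGk]
          apply le_antisymm
          · apply iSup_le
            intro i
            apply iSup_le
            intro hi
            rcases Nat.lt_succ_iff_lt_or_eq.mp hi with h' | h'
            · exact (le_iSup₂ (f := fun (i : Fin m) (_ : (i : ℕ) < k) => Fen i) i h').trans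
                le_sup_left
            · have : i = ⟨k, hk⟩ := Fin.ext h'
              rw [this]
              exact le_sup_right
          · apply sup_le
            · exact iSup₂_le fun i hi =>
                le_iSup₂ (f := fun (i : Fin m) (_ : (i : ℕ) < k + 1) => Fen i) i
                  (Nat.lt_succ_of_lt hi)
            · exact le_iSup₂ (f := fun (i : Fin m) (_ : (i : ℕ) < k + 1) => Fen i)
                ⟨k, hk⟩ (Nat.lt_succ_self k)
        rw [hstep]
        apply glue M hM1 _ _ (hGkfin k) (hvfin _) ih (hBndC _)
        by_cases hk0 : k = 0
        · left
          subst hk0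
          rw [hGkverts]
          simp
        · have hforj := hFC ⟨k, hk⟩ (by simpa using hk0)
          have hUeq : (⋃ (i : Fin m), ⋃ (_ : i < (⟨k, hk⟩ : Fin m)), (Fen i).verts)
              = (Gk k).verts := by
            rw [hGkverts]
            rfl
          rw [hUeq] at hforj
          rcases hforj with h' | ⟨v, h'⟩ | ⟨x, y, hadjj, ⟨i, hij, hadji⟩, h'⟩
          · left
            rw [Set.inter_comm]
            exact h'
          · right; left
            exact ⟨v, by rw [Set.inter_comm]; exact h'⟩
          · right; right
            refine ⟨x, y, ?_, hadjj, by rw [Set.inter_comm]; exact h'⟩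
            exact (hGkadj k x y).mpr ⟨i, hij, hadji⟩
      · have hstop : Gk (k + 1) = Gk k := by
          simp only [hGk]
          apply le_antisymm
          · exact iSup₂_le fun i hi =>
              le_iSup₂ (f := fun (i : Fin m) (_ : (i : ℕ) < k) => Fen i) i
                (lt_of_lt_of_le i.isLt (Nat.le_of_not_lt hk))
          · exact iSup₂_le fun i hi =>
              le_iSup₂ (f := fun (i : Fin m) (_ : (i : ℕ) < k + 1) => Fen i) i
                (Nat.lt_succ_of_lt hi)
        rw [hstop]
        exact ih
  have h𝒻 : 𝒻 = Set.range Fen := Set.ext fun H => (hmem H).trans Iff.rfl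
  have hSup : sSup 𝒻 = Gk m := by
    rw [h𝒻, sSup_range]
    apply le_antisymm
    · exact iSup_le fun i =>
        le_iSup₂ (f := fun (i : Fin m) (_ : (i : ℕ) < m) => Fen i) i i.isLt
    · exact iSup₂_le fun i _ => le_iSup Fen i
  have hBndSup : Bnd M (sSup 𝒻) := by
    rw [hSup]
    exact hBndG m
  have hsupFin : (sSup 𝒻).verts.Finite := by
    rw [hSup]
    exact hGkfin m
  obtain ⟨H₀, hH₀⟩ := hne
  obtain ⟨eiso⟩ := hcopies H₀ hH₀
  have hH₀le : H₀ ≤ sSup 𝒻 := le_sSup hH₀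
  obtain ⟨K₀, hK₀le, hK₀v, hK₀e, hK₀ne⟩ := transport eiso.symm (le_refl F)
  have hS2ub : ∀ x ∈ {x : ℝ | ∃ H' ≤ sSup 𝒻, H'.edgeSet.Nonempty ∧ x = d2 H'}, x ≤ M := by
    rintro x ⟨H', hle, hne', rfl⟩
    have hfin' : H'.verts.Finite := hsupFin.subset hle.1
    have hb := hBndSup H' hle hne'
    rw [d2, d2v]
    split_ifs with h3
    · have hpos : (0 : ℝ) < (H'.verts.ncard : ℝ) - 2 := by
        have h3' : (3 : ℝ) ≤ (H'.verts.ncard : ℝ) := by exact_mod_cast h3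
        linarith
      rw [div_le_iff₀ hpos]
      exact hb
    · exact hM1
  have hS2ne : {x : ℝ | ∃ H' ≤ sSup 𝒻, H'.edgeSet.Nonempty ∧ x = d2 H'}.Nonempty :=
    ⟨d2 K₀, K₀, hK₀le.trans hH₀le, hK₀ne ⟨e₀, he₀⟩, rfl⟩
  have hS2bdd : BddAbove {x : ℝ | ∃ H' ≤ sSup 𝒻, H'.edgeSet.Nonempty ∧ x = d2 H'} :=
    ⟨M, hS2ub⟩
  apply le_antisymm
  · exact csSup_le hS2ne hS2ub
  · refine csSup_le (s := {x : ℝ | ∃ H' ≤ F, H'.edgeSet.Nonempty ∧ x = d2 H'})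
      ⟨d2 E₀, E₀, hE₀le, hE₀ne, rfl⟩ ?_
    rintro x ⟨K, hKle, hKne, rfl⟩
    obtain ⟨K', hK'le, hv', he', hne'⟩ := transport eiso.symm hKle
    have hd2eq : d2 K' = d2 K := by rw [d2, d2, hv', he']
    rw [← hd2eq]
    exact le_csSup hS2bdd ⟨K', hK'le.trans hH₀le, hne' hKne, rfl⟩
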